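/- Every quiver in the mutation class of the Dynkin quiver A_k has at most 2k - 2 arrows, and each vertex has valency at most 4. -/

import Mathlib

open SimpleGraph

/-- A connected finite graph has a spanning tree. -/
lemma aux_exists_spanning_tree {V : Type} [Finite V] {G : SimpleGraph V} (hG : G.Connected) :
    ∃ T : SimpleGraph V, T ≤ G ∧ T.IsTree := by
  classical
  obtain ⟨T, ⟨hTG, hTa⟩, hmax⟩ :=
    Set.Finite.exists_maximalFor id {H : SimpleGraph V | H ≤ G ∧ H.IsAcyclic}
      (Set.toFinite _) ⟨⊥, bot_le, isAcyclic_bot⟩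
  simp only [id] at hmax
  have hadj : ∀ x y : V, G.Adj x y → T.Reachable x y := by
    intro x y hxy
    by_contra hr
    have hne : x ≠ y := hxy.ne
    set T' : SimpleGraph V := T ⊔ edge x y with hT'
    have hT'G : T' ≤ G := by
      refine sup_le hTG ?_
      intro a b hab
      rw [edge_adj] at hab
      rcases hab.1 with ⟨rfl, rfl⟩ | ⟨rfl, rfl⟩
      · exact hxy
      · exact hxy.symm
    have hT'a : T'.IsAcyclic := by
      intro v c hc
      by_cases he : s(x, y) ∈ c.edges
      · have hreach := (adj_and_reachable_delete_edges_iff_exists_cycle (G := T')).mpr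
          ⟨v, c, hc, he⟩
        refine hr (Reachable.mono ?_ hreach.2)
        intro a b hab
        rw [deleteEdges_adj] at hab
        rcases hab.1 with hab' | hab'
        · exact hab'
        · exact absurd (by rw [edge_adj] at hab'; rcases hab'.1 with ⟨h1, h2⟩ | ⟨h1, h2⟩ <;> simp [h1, h2, Sym2.eq_swap]) hab.2
      · have hsub : ∀ e ∈ c.edges, e ∈ T.edgeSet := by
          intro e hec
          have : e ∈ T'.edgeSet := c.edges_subset_edgeSet hec
          rw [hT', edgeSet_sup, edge, edgeSet_fromEdgeSet] at this
          rcases this with h1 | h1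
          · exact h1
          · exact absurd (h1.1 ▸ hec : e ∈ c.edges) (by
              rcases h1 with ⟨h2, -⟩
              simp only [Set.mem_singleton_iff] at h2
              subst h2
              exact he)
        exact hTa (c.transfer T hsub) (hc.transfer hsub)
    have : T = T' := le_antisymm le_sup_left (hmax (j := T') ⟨hT'G, hT'a⟩ le_sup_left)
    have hTadj : T.Adj x y := by
      rw [this, hT', sup_adj, edge_adj]
      exact Or.inr ⟨Or.inl ⟨rfl, rfl⟩, hne⟩
    exact hr hTadj.reachable
  have hTc : T.Connected := by
    haveI := hG.nonempty
    rw [connected_iff]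
    refine ⟨fun u v => ?_, hG.nonempty⟩
    obtain ⟨p⟩ := hG.preconnected u v
    induction p with
    | nil => exact Reachable.refl _
    | cons hp q ih => exact (hadj _ _ hp).trans ih
  exact ⟨T, hTG, hTc, hTa⟩

lemma aux_walk_len2 {V : Type} {G : SimpleGraph V} {x y : V} (p : G.Walk x y)
    (h : p.length = 2) : ∃ m, G.Adj x m ∧ G.Adj m y := by
  cases p with
  | nil => simp at h
  | cons ha q =>
    cases q with
    | nil => simp at h
    | cons hb r =>
      cases r with
      | nil => exact ⟨_, ha, hb⟩
      | cons hc s => simp [Walk.length_cons] at h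

/-- Two triangles sharing an edge contradict "all cycles have length 3". -/
lemma aux_no_two_triangles {V : Type} {G : SimpleGraph V}
    (h3 : ∀ (x : V) (w : G.Walk x x), w.IsCycle → w.length = 3)
    {a b c d : V} (hab : G.Adj a b) (hbc : G.Adj b c) (hca : G.Adj c a)
    (hbd : G.Adj b d) (hda : G.Adj d a) (hcd : c ≠ d) : False := by
  have h1 : a ≠ b := hab.ne
  have h2 : b ≠ c := hbc.ne
  have h3' : c ≠ a := hca.ne
  have h4 : b ≠ d := hbd.ne
  have h5 : d ≠ a := hda.ne
  have hcyc : (Walk.cons hca (Walk.cons hda.symm (Walk.cons hbd.symm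
      (Walk.cons hbc Walk.nil)))).IsCycle := by
    rw [Walk.isCycle_def]
    refine ⟨?_, by simp, ?_⟩
    · rw [Walk.isTrail_def]
      simp only [Walk.edges_cons, Walk.edges_nil, List.nodup_cons, List.mem_cons,
        List.not_mem_nil, or_false, List.nodup_nil, and_true, Sym2.eq, Sym2.rel_iff',
        Prod.mk.injEq, Prod.swap_prod_mk, not_or]
      tauto
    · simp only [Walk.support_cons, Walk.support_nil, List.tail_cons, List.nodup_cons,
        List.mem_cons, List.not_mem_nil, or_false, List.nodup_nil, and_true, not_or]
      tauto
  have := h3 c _ hcyc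
  simp at this

/-- A connected graph in which every cycle has length 3 has at most `2(n-1)` edges. -/
lemma aux_card_edge_le {V : Type} [Fintype V] {G : SimpleGraph V} [Fintype G.edgeSet]
    (hG : G.Connected)
    (h3 : ∀ (x : V) (w : G.Walk x x), w.IsCycle → w.length = 3) :
    G.edgeFinset.card ≤ 2 * (Fintype.card V - 1) := by
  classical
  obtain ⟨T, hTG, hT⟩ := aux_exists_spanning_tree hG
  haveI : Fintype T.edgeSet := (T.edgeSet.toFinite).fintype
  have htcard : T.edgeFinset.card + 1 = Fintype.card V := hT.card_edgeFinset
  set NT : Finset (Sym2 V) := G.edgeFinset \ T.edgeFinset with hNT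
  have key : ∀ e ∈ NT, ∃ x y m : V, e = s(x, y) ∧ G.Adj x y ∧ T.Adj x m ∧ T.Adj m y := by
    intro e he
    rw [hNT, Finset.mem_sdiff, mem_edgeFinset, mem_edgeFinset] at he
    obtain ⟨heG, heT⟩ := he
    induction e using Sym2.ind with
    | _ x y =>
      have hxy : G.Adj x y := heG
      -- tree path from y to x
      obtain ⟨w0⟩ := hT.isConnected.preconnected y x
      let p : T.Path y x := w0.toPath
      have hsubG : ∀ e ∈ (p : T.Walk y x).edges, e ∈ G.edgeSet := fun e hep =>
        edgeSet_subset_edgeSet.mpr hTG ((p : T.Walk y x).edges_subset_edgeSet hep)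
      let q : G.Walk y x := (p : T.Walk y x).transfer G hsubG
      have hq : q.IsPath := p.2.transfer _
      have hnot : s(x, y) ∉ q.edges := by
        rw [Walk.edges_transfer]
        intro hmem
        exact heT ((p : T.Walk y x).edges_subset_edgeSet hmem)
      have hcyc : (Walk.cons hxy q).IsCycle :=
        SimpleGraph.Path.cons_isCycle ⟨q, hq⟩ hxy hnot
      have hlen := h3 x _ hcyc
      rw [Walk.length_cons] at hlen
      have hql : q.length = 2 := by omega
      have hpl : (p : T.Walk y x).length = 2 := by
        rw [← Walk.length_transfer (p : T.Walk y x) hsubG]; exact hql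
      obtain ⟨m, hym, hmx⟩ := aux_walk_len2 _ hpl
      exact ⟨y, x, m, Sym2.eq_swap.symm, hxy.symm, hym, hmx⟩
  haveI : Nonempty V := hG.nonempty
  choose! fx fy fm hfe hfG hf1 hf2 using key
  have hmaps : ∀ e ∈ NT, s(fx e, fm e) ∈ T.edgeFinset := by
    intro e he
    rw [mem_edgeFinset]
    exact hf1 e he
  have hinj : ∀ e ∈ NT, ∀ f ∈ NT, s(fx e, fm e) = s(fx f, fm f) → e = f := by
    intro e he f hf heq
    have heT : e ∉ T.edgeSet := by
      rw [hNT, Finset.mem_sdiff, mem_edgeFinset, mem_edgeFinset] at he; exact he.2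
    have h1G : G.Adj (fx e) (fy e) := hfG e he
    have h1a : T.Adj (fx e) (fm e) := hf1 e he
    have h1b : T.Adj (fm e) (fy e) := hf2 e he
    have h2G : G.Adj (fx f) (fy f) := hfG f hf
    have h2a : T.Adj (fx f) (fm f) := hf1 f hf
    have h2b : T.Adj (fm f) (fy f) := hf2 f hf
    rw [Sym2.eq_iff] at heq
    rcases heq with ⟨hx, hm⟩ | ⟨hx, hm⟩
    · -- same orientation
      by_cases hy : fy e = fy f
      · rw [hfe e he, hfe f hf, hx, hy]
      · have hbd : G.Adj (fm e) (fy f) := by rw [hm]; exact hTG h2b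
        have hda : G.Adj (fy f) (fx e) := by rw [hx]; exact h2G.symm
        exact (aux_no_two_triangles h3 (hTG h1a) (hTG h1b) (h1G.symm) hbd hda hy).elim
    · -- swapped: fx e = fm f, fm e = fx f
      have h2b' : T.Adj (fx e) (fy f) := by rw [hx]; exact h2b
      have h2a' : G.Adj (fm e) (fy f) := by rw [hm]; exact h2G
      by_cases hy : fy e = fy f
      · exfalso
        apply heT
        rw [hfe e he]
        have : T.Adj (fx e) (fy e) := by rw [hy]; exact h2b'
        exact this
      · exact (aux_no_two_triangles h3 (hTG h1a) (hTG h1b) (h1G.symm) h2a'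
          (hTG h2b').symm hy).elim
  have hcard1 : NT.card ≤ T.edgeFinset.card :=
    Finset.card_le_card_of_injOn (fun e => s(fx e, fm e)) hmaps
      (fun a ha b hb hab => hinj a ha b hb hab)
  have hsub : T.edgeFinset ⊆ G.edgeFinset := edgeFinset_mono hTG
  have hcard2 : (G.edgeFinset \ T.edgeFinset).card + T.edgeFinset.card = G.edgeFinset.card :=
    Finset.card_sdiff_add_card_eq_card hsub
  rw [← hNT] at hcard2
  omega
/-- The valency of a vertex: the number of arrows incident with it. -/
noncomputable def valency {V E : Type} (src tgt : E → V) (x : V) : ℕ :=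
  {e : E | src e = x ∨ tgt e = x}.ncard

/-- Three arrows forming an oriented 3-cycle. -/
def IsOriented3Cycle {V E : Type} (src tgt : E → V) (a b c : E) : Prop :=
  tgt a = src b ∧ tgt b = src c ∧ tgt c = src a ∧
  src a ≠ src b ∧ src b ≠ src c ∧ src c ≠ src a

/-- Two arrows lie on a common oriented 3-cycle. -/
def OnCommon3Cycle {V E : Type} (src tgt : E → V) (e f : E) : Prop :=
  ∃ a b c : E, IsOriented3Cycle src tgt a b c ∧
    e ∈ ({a, b, c} : Set E) ∧ f ∈ ({a, b, c} : Set E)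

/-- An arrow lies on an oriented 3-cycle. -/
def On3Cycle {V E : Type} (src tgt : E → V) (e : E) : Prop :=
  OnCommon3Cycle src tgt e e

/-- The underlying graph of a quiver. -/
def underlyingGraph {V E : Type} (src tgt : E → V) : SimpleGraph V where
  Adj x y := x ≠ y ∧ ∃ e : E, (src e = x ∧ tgt e = y) ∨ (src e = y ∧ tgt e = x)
  symm := by
    constructor
    intro x y h
    exact ⟨h.1.symm, by obtain ⟨-, e, he⟩ := h; exact ⟨e, he.symm⟩⟩
  loopless := by constructor; intro x h; exact h.1 rfl

/-- The combinatorial characterization of the quivers in the mutation class of `A_k`: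
connected quivers with `k` vertices, no loops or 2-cycles, every vertex of valency at most
four, all non-trivial cycles oriented of length 3, a vertex of valency four having its arrows
split into two pairs lying on two distinct 3-cycles, and a vertex of valency three having two
arrows on a 3-cycle and one arrow on no 3-cycle. -/
structure IsInMutationClassA {V E : Type} [Fintype V] [Fintype E]
    (src tgt : E → V) (k : ℕ) : Prop where
  connected : (underlyingGraph src tgt).Connected
  card_vertices : Fintype.card V = k
  no_loops : ∀ e : E, src e ≠ tgt e
  no_multiple_arrows : ∀ e f : E, src e = src f → tgt e = tgt f → e = f
  no_two_cycles : ∀ e f : E, tgt e = src f → tgt f = src e → False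
  valency_le_four : ∀ x : V, valency src tgt x ≤ 4
  cycles_length_three :
    ∀ (x : V) (w : (underlyingGraph src tgt).Walk x x), w.IsCycle → w.length = 3
  triangles_oriented : ∀ x y z : V, (underlyingGraph src tgt).Adj x y →
    (underlyingGraph src tgt).Adj y z → (underlyingGraph src tgt).Adj z x →
    ∃ a b c : E, IsOriented3Cycle src tgt a b c ∧
      ({src a, src b, src c} : Set V) = {x, y, z}
  valency_four_split : ∀ x : V, valency src tgt x = 4 →
    ∃ e₁ e₂ e₃ e₄ : E, {e : E | src e = x ∨ tgt e = x} = {e₁, e₂, e₃, e₄} ∧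
      OnCommon3Cycle src tgt e₁ e₂ ∧ OnCommon3Cycle src tgt e₃ e₄ ∧
      ¬ OnCommon3Cycle src tgt e₁ e₃
  valency_three_split : ∀ x : V, valency src tgt x = 3 →
    ∃ e₁ e₂ e₃ : E, {e : E | src e = x ∨ tgt e = x} = {e₁, e₂, e₃} ∧
      OnCommon3Cycle src tgt e₁ e₂ ∧ ¬ On3Cycle src tgt e₃

/-- Every quiver in the mutation class of `A_k` has at most `2k - 2` arrows, and each of its
vertices has valency at most 4. -/
theorem stmt3 {V E : Type} [Fintype V] [Fintype E] (src tgt : E → V) (k : ℕ)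
    (h : IsInMutationClassA src tgt k) :
    Fintype.card E ≤ 2 * k - 2 ∧ ∀ x : V, valency src tgt x ≤ 4 := by
  classical
  refine ⟨?_, h.valency_le_four⟩
  haveI : Fintype (underlyingGraph src tgt).edgeSet :=
    ((underlyingGraph src tgt).edgeSet.toFinite).fintype
  haveI : Nonempty V := h.connected.nonempty
  have hadj : ∀ e : E, (underlyingGraph src tgt).Adj (src e) (tgt e) := fun e =>
    ⟨h.no_loops e, e, Or.inl ⟨rfl, rfl⟩⟩
  have hcard : Fintype.card E ≤ Fintype.card (underlyingGraph src tgt).edgeSet := by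
    refine Fintype.card_le_of_injective
      (fun e => ⟨s(src e, tgt e), (mem_edgeSet _).mpr (hadj e)⟩) ?_
    intro e f hef
    rw [Subtype.mk.injEq, Sym2.eq_iff] at hef
    rcases hef with ⟨h1, h2⟩ | ⟨h1, h2⟩
    · exact h.no_multiple_arrows e f h1 h2
    · exact (h.no_two_cycles e f h2 h1.symm).elim
  have hmain := aux_card_edge_le h.connected h.cycles_length_three
  rw [edgeFinset_card] at hmain
  have hk : Fintype.card V = k := h.card_vertices
  have hpos : 1 ≤ Fintype.card V := Fintype.card_pos
  omega
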